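/- arXiv:1806.01131 — 4 statements merged into one kernel-verified Lean document; each statement's English description precedes it below -/
import Mathlib

section
/- With the same hypotheses, the semi-Poisson bracket satisfies the compatibility with the module structure: {{a, b·f}} = {a,b}·f + b·{{a,f}} for all a,b ∈ A, f ∈ M, where {a,b} = (i/2)(C₁(a,b) − C₁(b,a)) is the induced Poisson bracket on A. -/
/-- The semi-Poisson bracket satisfies
`{{a, b·f}} = {a,b}·f + b·{{a,f}}`, where `{a,b} = (i/2)(C₁(a,b) − C₁(b,a))`. -/
theorem semiPoisson_module_compat
    (A : Type*) [CommRing A] [Algebra ℂ A]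
    (M : Type*) [AddCommGroup M] [Module ℂ M] [Module A M] [IsScalarTower ℂ A M]
    (C₁ : A → A → A) (L₁ : A → M → M) (R₁ : M → A → M)
    -- first-order term of the left module condition (a ⋆ b) ∙ f = a ∙ (b ∙ f)
    (hleft : ∀ a b : A, ∀ f : M,
      L₁ (a * b) f + C₁ a b • f = L₁ a (b • f) + a • L₁ b f)
    -- first-order term of the right module condition f ∙ (a ⋆ b) = (f ∙ a) ∙ b
    (hright : ∀ a b : A, ∀ f : M,
      R₁ f (a * b) + C₁ a b • f = R₁ (a • f) b + b • R₁ f a)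
    -- first-order term of the bimodule condition (a ∙ f) ∙ b = a ∙ (f ∙ b)
    (hbimod : ∀ a b : A, ∀ f : M,
      R₁ (a • f) b + b • L₁ a f = L₁ a (b • f) + a • R₁ f b) :
    ∀ a b : A, ∀ f : M,
      (Complex.I / 2) • (L₁ a (b • f) - R₁ (b • f) a) =
        ((Complex.I / 2) • (C₁ a b - C₁ b a)) • f +
        b • ((Complex.I / 2) • (L₁ a f - R₁ f a)) := by
  intro a b f
  have e1 : R₁ (b • f) a = R₁ f (b * a) + C₁ b a • f - a • R₁ f b :=
    (eq_sub_of_add_eq (hright b a f).symm)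
  have e2 : R₁ (a • f) b = R₁ f (a * b) + C₁ a b • f - b • R₁ f a :=
    (eq_sub_of_add_eq (hright a b f).symm)
  have e3 : L₁ a (b • f) = R₁ (a • f) b + b • L₁ a f - a • R₁ f b :=
    (eq_sub_of_add_eq (hbimod a b f).symm)
  have key : L₁ a (b • f) - R₁ (b • f) a
      = (C₁ a b - C₁ b a) • f + b • (L₁ a f - R₁ f a) := by
    rw [e3, e2, e1, sub_smul, smul_sub, mul_comm b a]
    abel
  rw [key, smul_add, smul_comm (Complex.I / 2) b,
    IsScalarTower.smul_assoc (Complex.I / 2) (C₁ a b - C₁ b a) f]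
end

section
/- The semi-Poisson bracket is invariant under bimodule equivalence: if T = id + λT₁ + O(λ²) is an equivalence between two bimodule deformations (∙,∙') and (∙̃,∙̃') of a symmetric A-bimodule M, i.e. T(a∙f) = a ∙̃ T(f) and T(f∙a) = T(f) ∙̃ a, then the first-order brackets agree: L₁(a,f) − R₁(f,a) = L̃₁(a,f) − R̃₁(f,a) for all a ∈ A, f ∈ M. -/
/-- The semi-Poisson bracket is invariant under bimodule equivalence. -/
theorem semiPoisson_invariant_under_equivalence
    (A : Type*) [CommRing A]
    (M : Type*) [AddCommGroup M] [Module A M]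
    (L₁ Lt₁ : A → M → M) (R₁ Rt₁ : M → A → M) (T₁ : M → M)
    -- first-order term of T(a ∙ f) = a ∙̃ T(f)
    (hTleft : ∀ a : A, ∀ f : M, T₁ (a • f) + L₁ a f = Lt₁ a f + a • T₁ f)
    -- first-order term of T(f ∙ a) = T(f) ∙̃ a
    (hTright : ∀ a : A, ∀ f : M, T₁ (a • f) + R₁ f a = Rt₁ f a + a • T₁ f) :
    ∀ a : A, ∀ f : M, L₁ a f - R₁ f a = Lt₁ a f - Rt₁ f a := by
  intro a f
  have h := congrArg₂ (· - ·) (hTleft a f) (hTright a f)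
  simp only [add_sub_add_comm] at h
  abel_nf at h ⊢
  exact h
end

section
/- A fiber-preserving bimodule deformation forces equality of left and right star products: if ∙ is a left (A[[λ]],⋆)-module and ∙' a right (A[[λ]],⋆')-module structure on C∞(P)[[λ]] forming a bimodule, both fiber preserving (a ∙ 1 = pr*a and 1 ∙' a = pr*a), then pr*(a ⋆ b) = pr*(a ⋆' b) for all a,b; in particular if pr* is injective, ⋆ = ⋆'. -/
/-- A fiber-preserving bimodule deformation with left star product ⋆ and
right star product ⋆' forces pr*(a ⋆ b) = pr*(a ⋆' b); if pr* is injective, ⋆ = ⋆'. -/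
theorem fiberPreserving_bimodule_star_products_agree
    (A B : Type*)
    (star star' : A → A → A) (l : A → B → B) (r : B → A → B) (p : A → B) (one : A)
    -- bimodule compatibility (a ∙ f) ∙' b = a ∙ (f ∙' b)
    (hbimod : ∀ (a : A) (f : B) (b : A), r (l a f) b = l a (r f b))
    -- a ∙ 1 = pr* a  and  1 ∙' a = pr* a
    (hl1 : ∀ a : A, l a (p one) = p a)
    (hr1 : ∀ a : A, r (p one) a = p a)
    -- fiber preserving: a ∙ pr* b = pr*(a ⋆ b)  and  pr* b ∙' a = pr*(b ⋆' a)
    (hfl : ∀ a b : A, l a (p b) = p (star a b))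
    (hfr : ∀ a b : A, r (p b) a = p (star' b a)) :
    (∀ a b : A, p (star a b) = p (star' a b)) ∧
      (Function.Injective p → star = star') := by
  have key : ∀ a b : A, p (star a b) = p (star' a b) := fun a b => by
    rw [← hfl, ← hr1 b, ← hbimod, hl1, hfr]
  exact ⟨key, fun hp => funext fun a => funext fun b => hp (key a b)⟩
end

section
/- Antisymmetrization computes the cohomology class: let A be commutative and suppose every Hochschild cohomology class of HH^k(A,M) has an antisymmetric multiderivation representative (as produced by the map G̃ from the Koszul complex). Then for any k-cocycle φ, the total antisymmetrization Alt(φ) is a cocycle cohomologous to φ; in particular Alt(δψ) = 0 for all (k−1)-cochains ψ. -/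
open Finset

namespace AntisymHelper18

lemma eq_zero_of_eq_neg (K : Type*) [Field K] [CharZero K] {M : Type*} [AddCommGroup M]
    [Module K M] {S : M} (h : S = -S) : S = 0 := by
  have h2 : (2:K) • S = 0 := by
    rw [two_smul]
    rw [eq_neg_iff_add_eq_zero] at h
    exact h
  rcases smul_eq_zero.mp h2 with h2 | h2
  · exact absurd h2 two_ne_zero
  · exact h2

def hfc {A : Type*} [CommRing A] (n : ℕ) (a : Fin (n+1) → A) (j : ℕ) : A :=
  if j = 0 then a 0 else if n + 1 ≤ j then a (Fin.last n) else 1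

def hft {A : Type*} [CommRing A] (n : ℕ) (a : Fin (n+1) → A) (j : ℕ) : Fin n → A :=
  fun i => if i.1 + 1 < j then a i.castSucc
    else if i.1 + 1 = j then a i.castSucc * a i.succ else a i.succ

def hd (K : Type*) [Field K] {A M : Type*} [CommRing A] [Algebra K A]
    [AddCommGroup M] [Module K M] [Module A M] [IsScalarTower K A M]
    (n : ℕ) (ψ : (Fin n → A) → M) : (Fin (n+1) → A) → M := fun a =>
  a 0 • ψ (fun i => a i.succ)
    + ∑ i : Fin n, ((-1 : K) ^ (i.1 + 1)) •
        ψ (fun j => if j.1 < i.1 then a j.castSucc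
             else if j.1 = i.1 then a i.castSucc * a i.succ else a j.succ)
    + ((-1 : K) ^ (n + 1)) • (a (Fin.last n) • ψ (fun i => a i.castSucc))

section Main

variable {K : Type*} [Field K] [CharZero K]
variable {A : Type*} [CommRing A] [Algebra K A]
variable {M : Type*} [AddCommGroup M] [Module K M] [Module A M] [IsScalarTower K A M]

set_option linter.unusedSectionVars false

lemma hd_eq (n : ℕ) (ψ : (Fin n → A) → M) (a : Fin (n+1) → A) :
    hd K n ψ a = ∑ j : Fin (n+2), ((-1 : K) ^ (j.1)) • (hfc n a j.1 • ψ (hft n a j.1)) := by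
  rw [Fin.sum_univ_castSucc, Fin.sum_univ_succ]
  have h0 : ((-1:K) ^ (((0 : Fin (n+1)).castSucc).1)) •
      (hfc n a ((0 : Fin (n+1)).castSucc).1 • ψ (hft n a ((0 : Fin (n+1)).castSucc).1))
      = a 0 • ψ (fun i => a i.succ) := by
    have : hft n a 0 = fun i => a i.succ := by
      funext i; simp [hft]
    simp [hfc, this]
  have hlast : ((-1:K) ^ ((Fin.last (n+1)).1)) •
      (hfc n a (Fin.last (n+1)).1 • ψ (hft n a (Fin.last (n+1)).1))
      = ((-1 : K) ^ (n + 1)) • (a (Fin.last n) • ψ (fun i => a i.castSucc)) := by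
    have : hft n a (n+1) = fun i => a i.castSucc := by
      funext i; have := i.2; simp only [hft]; rw [if_pos (by omega)]
    simp [hfc, this]
  have hmid : ∀ i : Fin n, ((-1:K) ^ ((i.succ.castSucc).1)) •
      (hfc n a (i.succ.castSucc).1 • ψ (hft n a (i.succ.castSucc).1))
      = ((-1 : K) ^ (i.1 + 1)) •
        ψ (fun j => if j.1 < i.1 then a j.castSucc
             else if j.1 = i.1 then a i.castSucc * a i.succ else a j.succ) := by
    intro i
    have ht : hft n a (i.1+1) = fun j => if j.1 < i.1 then a j.castSucc
        else if j.1 = i.1 then a i.castSucc * a i.succ else a j.succ := by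
      funext j
      simp only [hft]
      rcases lt_trichotomy j.1 i.1 with h | h | h
      · rw [if_pos (by omega), if_pos h]
      · have : j = i := Fin.ext h
        subst this
        rw [if_neg (by omega), if_pos (by omega), if_neg (by omega), if_pos rfl]
      · rw [if_neg (by omega), if_neg (by omega), if_neg (by omega), if_neg (by omega)]
    have hc : hfc n a (i.1+1) = 1 := by
      have := i.2
      simp only [hfc]; rw [if_neg (by omega), if_neg (by omega)]
    simp [ht, hc]
  rw [h0, hlast, Finset.sum_congr rfl (fun i _ => hmid i)]
  rfl

set_option maxHeartbeats 4000000 in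
lemma hkey (n : ℕ) (ψ : (Fin n → A) → M) (a : Fin (n+2) → A) (j l : ℕ)
    (hjl : j ≤ l) (hl : l ≤ n+1) :
    (hfc (n+1) a j * hfc n (hft (n+1) a j) l) • ψ (hft n (hft (n+1) a j) l)
    = (hfc (n+1) a (l+1) * hfc n (hft (n+1) a (l+1)) j) • ψ (hft n (hft (n+1) a (l+1)) j) := by
  set f : ℕ → A := fun v => a ⟨min v (n+1), by omega⟩ with hf
  have ha : ∀ x : Fin (n+2), a x = f x.1 := by
    intro x
    have : min x.1 (n+1) = x.1 := by omega
    simp only [hf, this]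
  have ht : hft n (hft (n+1) a j) l = hft n (hft (n+1) a (l+1)) j := by
    funext i
    have hi := i.2
    simp only [hft, ha, Fin.coe_castSucc, Fin.val_succ, Fin.val_zero, Fin.val_last]
    split_ifs <;> first | rfl | contradiction | (exfalso; omega) | ring
  have hs : hfc (n+1) a j * hfc n (hft (n+1) a j) l
      = hfc (n+1) a (l+1) * hfc n (hft (n+1) a (l+1)) j := by
    simp only [hfc, hft, ha, Fin.coe_castSucc, Fin.val_succ, Fin.val_zero, Fin.val_last]
    split_ifs <;> first | rfl | contradiction | (exfalso; omega) | ring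
  rw [ht, hs]

lemma sum_cancel (n : ℕ) (g : ℕ → ℕ → M)
    (hg : ∀ j l, j ≤ l → l ≤ n+1 → g j l = g (l+1) j) :
    ∑ j : Fin (n+3), ∑ l : Fin (n+2), ((-1:K)^(j.1+l.1)) • g j.1 l.1 = 0 := by
  classical
  set F : Fin (n+3) × Fin (n+2) → M := fun p => ((-1:K)^(p.1.1+p.2.1)) • g p.1.1 p.2.1 with hF
  have h1 : ∑ j : Fin (n+3), ∑ l : Fin (n+2), ((-1:K)^(j.1+l.1)) • g j.1 l.1
      = ∑ p ∈ (Finset.univ ×ˢ Finset.univ : Finset (Fin (n+3) × Fin (n+2))), F p := by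
    rw [Finset.sum_product]
  rw [h1, ← Finset.sum_filter_add_sum_filter_not (Finset.univ ×ˢ Finset.univ)
    (fun p : Fin (n+3) × Fin (n+2) => p.1.1 ≤ p.2.1) F]
  have h2 : ∑ p ∈ (Finset.univ ×ˢ Finset.univ : Finset (Fin (n+3) × Fin (n+2))).filter
        (fun p => p.1.1 ≤ p.2.1), (- F p)
      = ∑ p ∈ (Finset.univ ×ˢ Finset.univ : Finset (Fin (n+3) × Fin (n+2))).filter
        (fun p => ¬ p.1.1 ≤ p.2.1), F p := by
    apply Finset.sum_nbij'
      (i := fun p => (p.2.succ, (⟨min p.1.1 (n+1), by omega⟩ : Fin (n+2))))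
      (j := fun q => ((⟨min q.2.1 (n+2), by omega⟩ : Fin (n+3)), (⟨q.1.1 - 1, by omega⟩ : Fin (n+2))))
    · intro p hp
      simp only [Finset.mem_filter, Finset.mem_product, Finset.mem_univ, true_and, and_true] at hp ⊢
      simp only [Fin.val_succ]
      omega
    · intro q hq
      simp only [Finset.mem_filter, Finset.mem_product, Finset.mem_univ, true_and, and_true] at hq ⊢
      have h1 := q.1.2
      have h2 := q.2.2
      omega
    · intro p hp
      simp only [Finset.mem_filter, Finset.mem_product, Finset.mem_univ, true_and, and_true] at hp
      have h2 := p.2.2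
      ext
      · simp only [Fin.val_succ]; omega
      · simp only [Fin.val_succ]; omega
    · intro q hq
      simp only [Finset.mem_filter, Finset.mem_product, Finset.mem_univ, true_and, and_true] at hq
      have h1 := q.1.2
      have h2 := q.2.2
      ext
      · simp only [Fin.val_succ]; omega
      · simp only [Fin.val_succ]; omega
    · intro p hp
      simp only [Finset.mem_filter, Finset.mem_product, Finset.mem_univ, true_and, and_true] at hp
      have h2 := p.2.2
      have hmin : min p.1.1 (n+1) = p.1.1 := by omega
      simp only [hF, Fin.val_succ, hmin]
      rw [← hg p.1.1 p.2.1 hp (by omega)]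
      have he : p.2.1 + 1 + p.1.1 = (p.1.1 + p.2.1) + 1 := by omega
      rw [he, pow_succ]
      rw [mul_neg_one, neg_smul]
  rw [← h2]
  rw [← Finset.sum_add_distrib]
  simp

lemma hd_hd (n : ℕ) (ψ : (Fin n → A) → M) : hd K (n+1) (hd K n ψ) = 0 := by
  funext a
  rw [hd_eq]
  have step : ∀ j : Fin (n+3),
      ((-1 : K) ^ (j.1)) • (hfc (n+1) a j.1 • (hd K n ψ) (hft (n+1) a j.1))
      = ∑ l : Fin (n+2), ((-1:K)^(j.1+l.1)) •
          ((hfc (n+1) a j.1 * hfc n (hft (n+1) a j.1) l.1) • ψ (hft n (hft (n+1) a j.1) l.1)) := by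
    intro j
    rw [hd_eq, Finset.smul_sum, Finset.smul_sum]
    refine Finset.sum_congr rfl (fun l _ => ?_)
    rw [smul_comm (hfc (n+1) a j.1) ((-1:K)^(l.1)), smul_smul ((-1:K)^(j.1)), ← pow_add,
      smul_smul (hfc (n+1) a j.1)]
  rw [Finset.sum_congr rfl (fun j _ => step j)]
  exact sum_cancel n
    (fun j l => (hfc (n+1) a j * hfc n (hft (n+1) a j) l) • ψ (hft n (hft (n+1) a j) l))
    (fun j l hjl hl => hkey n ψ a j l hjl hl)

lemma alt_hd (n : ℕ) (ψ : (Fin n → A) → M) (a : Fin (n+1) → A) :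
    ∑ σ : Equiv.Perm (Fin (n+1)),
      ((Equiv.Perm.sign σ : ℤ) : K) • hd K n ψ (a ∘ σ) = 0 := by
  classical
  set sg : Equiv.Perm (Fin (n+1)) → K := fun σ => ((Equiv.Perm.sign σ : ℤ) : K) with hsg
  have expand : ∑ σ : Equiv.Perm (Fin (n+1)), sg σ • hd K n ψ (a ∘ σ)
      = (∑ σ : Equiv.Perm (Fin (n+1)), sg σ • ((a ∘ σ) 0 • ψ (fun i => (a ∘ σ) i.succ)))
        + (∑ σ : Equiv.Perm (Fin (n+1)), ∑ i : Fin n, sg σ • (((-1 : K) ^ (i.1 + 1)) •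
            ψ (fun j => if j.1 < i.1 then (a ∘ σ) j.castSucc
                 else if j.1 = i.1 then (a ∘ σ) i.castSucc * (a ∘ σ) i.succ
                 else (a ∘ σ) j.succ)))
        + (∑ σ : Equiv.Perm (Fin (n+1)), sg σ • (((-1 : K) ^ (n + 1)) •
            ((a ∘ σ) (Fin.last n) • ψ (fun i => (a ∘ σ) i.castSucc)))) := by
    rw [← Finset.sum_add_distrib, ← Finset.sum_add_distrib]
    refine Finset.sum_congr rfl (fun σ _ => ?_)
    simp only [hd, smul_add, Finset.smul_sum]
  rw [expand]
  have hmid : (∑ σ : Equiv.Perm (Fin (n+1)), ∑ i : Fin n, sg σ • (((-1 : K) ^ (i.1 + 1)) •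
            ψ (fun j => if j.1 < i.1 then (a ∘ σ) j.castSucc
                 else if j.1 = i.1 then (a ∘ σ) i.castSucc * (a ∘ σ) i.succ
                 else (a ∘ σ) j.succ))) = 0 := by
    rw [Finset.sum_comm]
    refine Finset.sum_eq_zero (fun i _ => ?_)
    have factor : ∀ σ : Equiv.Perm (Fin (n+1)), sg σ • (((-1 : K) ^ (i.1 + 1)) •
            ψ (fun j => if j.1 < i.1 then (a ∘ σ) j.castSucc
                 else if j.1 = i.1 then (a ∘ σ) i.castSucc * (a ∘ σ) i.succ
                 else (a ∘ σ) j.succ))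
        = ((-1 : K) ^ (i.1 + 1)) • (sg σ •
            ψ (fun j => if j.1 < i.1 then (a ∘ σ) j.castSucc
                 else if j.1 = i.1 then (a ∘ σ) i.castSucc * (a ∘ σ) i.succ
                 else (a ∘ σ) j.succ)) := fun σ => smul_comm _ _ _
    rw [Finset.sum_congr rfl (fun σ _ => factor σ), ← Finset.smul_sum]
    set s : Equiv.Perm (Fin (n+1)) := Equiv.swap i.castSucc i.succ with hs
    set S : M := ∑ σ : Equiv.Perm (Fin (n+1)), sg σ •
            ψ (fun j => if j.1 < i.1 then (a ∘ σ) j.castSucc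
                 else if j.1 = i.1 then (a ∘ σ) i.castSucc * (a ∘ σ) i.succ
                 else (a ∘ σ) j.succ) with hS
    have hSS : S = -S := by
      have reindex : S = ∑ σ : Equiv.Perm (Fin (n+1)), sg (σ * s) •
            ψ (fun j => if j.1 < i.1 then (a ∘ (σ * s)) j.castSucc
                 else if j.1 = i.1 then (a ∘ (σ * s)) i.castSucc * (a ∘ (σ * s)) i.succ
                 else (a ∘ (σ * s)) j.succ) := by
        rw [hS]
        exact (Fintype.sum_equiv (Equiv.mulRight s)
          (fun σ => sg (σ * s) •
            ψ (fun j : Fin n => if j.1 < i.1 then (a ∘ (σ * s)) j.castSucc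
                 else if j.1 = i.1 then (a ∘ (σ * s)) i.castSucc * (a ∘ (σ * s)) i.succ
                 else (a ∘ (σ * s)) j.succ))
          (fun σ => sg σ •
            ψ (fun j : Fin n => if j.1 < i.1 then (a ∘ σ) j.castSucc
                 else if j.1 = i.1 then (a ∘ σ) i.castSucc * (a ∘ σ) i.succ
                 else (a ∘ σ) j.succ))
          (fun σ => rfl)).symm
      have step2 : ∑ σ : Equiv.Perm (Fin (n+1)), sg (σ * s) •
            ψ (fun j : Fin n => if j.1 < i.1 then (a ∘ (σ * s)) j.castSucc
                 else if j.1 = i.1 then (a ∘ (σ * s)) i.castSucc * (a ∘ (σ * s)) i.succ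
                 else (a ∘ (σ * s)) j.succ)
          = ∑ σ : Equiv.Perm (Fin (n+1)), -(sg σ •
            ψ (fun j : Fin n => if j.1 < i.1 then (a ∘ σ) j.castSucc
                 else if j.1 = i.1 then (a ∘ σ) i.castSucc * (a ∘ σ) i.succ
                 else (a ∘ σ) j.succ)) := by
        refine Finset.sum_congr rfl (fun σ _ => ?_)
        have hsgn : sg (σ * s) = - sg σ := by
          simp only [hsg, Equiv.Perm.sign_mul, hs,
            Equiv.Perm.sign_swap (Fin.castSucc_lt_succ : i.castSucc < i.succ).ne]
          push_cast
          ring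
        have htup : (fun j : Fin n => if j.1 < i.1 then (a ∘ (σ * s)) j.castSucc
                   else if j.1 = i.1 then (a ∘ (σ * s)) i.castSucc * (a ∘ (σ * s)) i.succ
                   else (a ∘ (σ * s)) j.succ)
            = (fun j : Fin n => if j.1 < i.1 then (a ∘ σ) j.castSucc
                   else if j.1 = i.1 then (a ∘ σ) i.castSucc * (a ∘ σ) i.succ
                   else (a ∘ σ) j.succ) := by
          funext (j : Fin n)
          simp only [Function.comp_apply, Equiv.Perm.mul_apply]
          split_ifs with h1 h2
          · rw [hs, Equiv.swap_apply_of_ne_of_ne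
              (Fin.ne_of_val_ne (by simp; omega)) (Fin.ne_of_val_ne (by simp; omega))]
          · rw [hs, Equiv.swap_apply_left, Equiv.swap_apply_right, mul_comm]
          · rw [hs, Equiv.swap_apply_of_ne_of_ne
              (Fin.ne_of_val_ne (by simp; omega)) (Fin.ne_of_val_ne (by simp; omega))]
        rw [hsgn, htup, neg_smul]
      conv_lhs => rw [reindex, step2]
      rw [Finset.sum_neg_distrib, ← hS]
    rw [eq_zero_of_eq_neg K hSS, smul_zero]
  rw [hmid, add_zero]
  set c : Equiv.Perm (Fin (n+1)) := (finRotate (n+1))⁻¹ with hc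
  have hc0 : c 0 = Fin.last n := by
    rw [hc]
    rw [Equiv.Perm.inv_def, Equiv.symm_apply_eq, finRotate_last]
  have hcs : ∀ i : Fin n, c i.succ = i.castSucc := by
    intro i
    rw [hc, Equiv.Perm.inv_def, Equiv.symm_apply_eq, finRotate_succ_apply,
      Fin.coeSucc_eq_succ]
  have hsgc : ∀ σ, sg (σ * c) = sg σ * (-1 : K) ^ n := by
    intro σ
    simp only [hsg, Equiv.Perm.sign_mul, hc, Equiv.Perm.sign_inv, sign_finRotate]
    push_cast
    ring
  set T : Equiv.Perm (Fin (n+1)) → M := fun σ =>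
    sg σ • ((a ∘ σ) (Fin.last n) • ψ (fun i => (a ∘ σ) i.castSucc)) with hT
  have hfirst : (∑ σ : Equiv.Perm (Fin (n+1)), sg σ • ((a ∘ σ) 0 • ψ (fun i => (a ∘ σ) i.succ)))
      = ((-1 : K) ^ n) • ∑ σ : Equiv.Perm (Fin (n+1)), T σ := by
    have reindex : (∑ σ : Equiv.Perm (Fin (n+1)), sg σ • ((a ∘ σ) 0 • ψ (fun i => (a ∘ σ) i.succ)))
        = ∑ σ : Equiv.Perm (Fin (n+1)),
            sg (σ * c) • ((a ∘ (σ * c)) 0 • ψ (fun i => (a ∘ (σ * c)) i.succ)) :=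
      (Fintype.sum_equiv (Equiv.mulRight c)
        (fun σ => sg (σ * c) • ((a ∘ (σ * c)) 0 • ψ (fun i : Fin n => (a ∘ (σ * c)) i.succ)))
        (fun σ => sg σ • ((a ∘ σ) 0 • ψ (fun i : Fin n => (a ∘ σ) i.succ)))
        (fun σ => rfl)).symm
    rw [reindex, Finset.smul_sum]
    refine Finset.sum_congr rfl (fun σ _ => ?_)
    have h1 : (a ∘ (σ * c)) 0 = (a ∘ σ) (Fin.last n) := by
      simp only [Function.comp_apply, Equiv.Perm.mul_apply, hc0]
    have h2 : (fun i => (a ∘ (σ * c)) i.succ) = (fun i : Fin n => (a ∘ σ) i.castSucc) := by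
      funext i
      simp only [Function.comp_apply, Equiv.Perm.mul_apply, hcs i]
    rw [h1, h2, hsgc, hT]
    rw [mul_smul, smul_comm]
  have hlast : (∑ σ : Equiv.Perm (Fin (n+1)), sg σ • (((-1 : K) ^ (n + 1)) •
            ((a ∘ σ) (Fin.last n) • ψ (fun i => (a ∘ σ) i.castSucc))))
      = ((-1 : K) ^ (n+1)) • ∑ σ : Equiv.Perm (Fin (n+1)), T σ := by
    rw [Finset.smul_sum]
    refine Finset.sum_congr rfl (fun σ _ => ?_)
    rw [hT, smul_comm]
  rw [hfirst, hlast, ← add_smul]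
  have : ((-1 : K) ^ n) + ((-1 : K) ^ (n+1)) = 0 := by ring
  rw [this, zero_smul]

lemma hd_sub (n : ℕ) (f g : (Fin n → A) → M) :
    hd K n (fun x => f x - g x) = fun a => hd K n f a - hd K n g a := by
  funext a
  simp only [hd, smul_sub, Finset.sum_sub_distrib]
  abel

lemma hd_neg (n : ℕ) (g : (Fin n → A) → M) :
    hd K n (fun x => -g x) = fun a => -hd K n g a := by
  funext a
  simp only [hd, smul_neg, Finset.sum_neg_distrib]
  abel

end Main

end AntisymHelper18

open AntisymHelper18 in
/-- Antisymmetrization computes the Hochschild cohomology class.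
For a commutative algebra A and a symmetric A-bimodule M (over a field K of
characteristic zero), if a Hochschild (k+1)-cocycle φ admits an antisymmetric
representative (as produced by the map G̃ from the Koszul complex), then Alt(φ) is a
cocycle cohomologous to φ; and the antisymmetrization of every Hochschild coboundary
vanishes. -/
theorem antisymmetrization_computes_class
    (K : Type*) [Field K] [CharZero K]
    (A : Type*) [CommRing A] [Algebra K A]
    (M : Type*) [AddCommGroup M] [Module K M] [Module A M] [IsScalarTower K A M]
    (k : ℕ)
    -- total antisymmetrization of cochains
    (Alt : ∀ {n : ℕ}, ((Fin n → A) → M) → ((Fin n → A) → M))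
    (hAlt : ∀ {n : ℕ} (φ : (Fin n → A) → M) (a : Fin n → A),
      Alt φ a = (Nat.factorial n : K)⁻¹ •
        ∑ σ : Equiv.Perm (Fin n), ((Equiv.Perm.sign σ : ℤ) : K) • φ (a ∘ σ))
    -- the Hochschild differential
    (δ : ∀ {n : ℕ}, ((Fin n → A) → M) → ((Fin (n + 1) → A) → M))
    (hδ : ∀ {n : ℕ} (φ : (Fin n → A) → M) (a : Fin (n + 1) → A),
      δ φ a = a 0 • φ (fun i => a i.succ)
        + ∑ i : Fin n, ((-1 : K) ^ (i.1 + 1)) •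
            φ (fun j => if j.1 < i.1 then a j.castSucc
                 else if j.1 = i.1 then a i.castSucc * a i.succ else a j.succ)
        + ((-1 : K) ^ (n + 1)) • (a (Fin.last n) • φ (fun i => a i.castSucc)))
    -- φ is a (k+1)-cocycle with an antisymmetric representative
    (φ : (Fin (k + 1) → A) → M)
    (hcocycle : δ φ = 0)
    (hrep : ∃ (η : (Fin (k + 1) → A) → M) (ψ : (Fin k → A) → M),
      Alt η = η ∧ ∀ a, φ a = η a + δ ψ a) :
    -- Alt kills coboundaries, and Alt(φ) is a cocycle cohomologous to φ
    (∀ ψ : (Fin k → A) → M, Alt (δ ψ) = 0) ∧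
    (δ (Alt φ) = 0 ∧ ∃ χ : (Fin k → A) → M, ∀ a, Alt φ a - φ a = δ χ a) := by
  have hdeq : ∀ (n : ℕ) (ψ : (Fin n → A) → M), δ ψ = hd K n ψ :=
    fun n ψ => funext (fun a => hδ ψ a)
  have part1 : ∀ ψ : (Fin k → A) → M, Alt (δ ψ) = 0 := by
    intro ψ
    funext a
    rw [hAlt, hdeq k ψ, alt_hd, smul_zero]
    rfl
  obtain ⟨η, ψ0, hη, hφ⟩ := hrep
  have hAltφ : Alt φ = η := by
    funext a
    rw [hAlt]
    have hsplit : ∀ σ : Equiv.Perm (Fin (k+1)),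
        ((Equiv.Perm.sign σ : ℤ) : K) • φ (a ∘ σ)
        = ((Equiv.Perm.sign σ : ℤ) : K) • η (a ∘ σ)
          + ((Equiv.Perm.sign σ : ℤ) : K) • (hd K k ψ0) (a ∘ σ) := by
      intro σ
      rw [hφ (a ∘ σ), hdeq k ψ0, smul_add]
    rw [Finset.sum_congr rfl (fun σ _ => hsplit σ), Finset.sum_add_distrib, alt_hd, add_zero]
    rw [← hAlt η a, hη]
  have hAφη : ∀ a, Alt φ a = η a := fun a => by rw [hAltφ]
  have hηeq : η = fun x => φ x - hd K k ψ0 x := by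
    funext x
    rw [hφ x, hdeq k ψ0]
    abel
  have part2 : δ (Alt φ) = 0 := by
    rw [hAltφ, hdeq (k+1) η, hηeq, hd_sub]
    funext a
    have h1 : hd K (k+1) φ a = 0 := by
      rw [← hdeq (k+1) φ, hcocycle]
      rfl
    have h2 : hd K (k+1) (hd K k ψ0) a = (0 : M) := by
      rw [hd_hd k ψ0]
      rfl
    simp only [h1, h2, sub_zero]
    rfl
  refine ⟨part1, part2, ⟨fun x => -ψ0 x, fun a => ?_⟩⟩
  rw [hAltφ, hφ a, hdeq k ψ0, hdeq k (fun x => -ψ0 x), hd_neg]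
  abel
end
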